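/- For every n ≥ 0, the prefix of length 4^n of the Thue–Morse word t is a palindrome. -/

import Mathlib

/-- Prefix `u[0..n-1]` of the infinite word `u`. -/
def wordPrefix {A : Type*} (u : ℕ → A) (n : ℕ) : List A :=
  List.ofFn (fun i : Fin n => u i)

/-- Factor `u[i..i+ℓ-1]` of the infinite word `u`. -/
def wordFactor {A : Type*} (u : ℕ → A) (i ℓ : ℕ) : List A :=
  List.ofFn (fun j : Fin ℓ => u (i + j))

/-- A palindrome is a word equal to its reversal. -/
def IsPalindrome {A : Type*} (w : List A) : Prop := w.reverse = w

/-- `w` is a concatenation of `k` nonempty palindromes. -/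
def IsPalConcat {A : Type*} (w : List A) (k : ℕ) : Prop :=
  ∃ ps : List (List A), ps.length = k ∧ (∀ p ∈ ps, p ≠ [] ∧ IsPalindrome p) ∧ ps.flatten = w

/-- Prefix palindromic length: the least number of nonempty palindromes whose
concatenation is the prefix of length `n` of `u` (`PPL u 0 = 0`). -/
noncomputable def PPL {A : Type*} (u : ℕ → A) (n : ℕ) : ℕ :=
  sInf {k | IsPalConcat (wordPrefix u n) k}

/-- The PPL-difference sequence `d_u(n) = PPL_u(n+1) - PPL_u(n)`. -/
noncomputable def PPLdiff {A : Type*} (u : ℕ → A) (n : ℕ) : ℤ :=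
  (PPL u (n + 1) : ℤ) - (PPL u n : ℤ)

/-- The Thue–Morse word: `t n` is the number of `1`'s in the binary
representation of `n`, taken mod 2. -/
def thueMorse (n : ℕ) : ℕ := (Nat.digits 2 n).count 1 % 2

lemma s_step (j b : ℕ) (hb : b < 2) :
    ((Nat.digits 2 (2 * j + b)).count 1) = (Nat.digits 2 j).count 1 + b := by
  rcases Nat.eq_zero_or_pos (2 * j + b) with h | h
  · have hj : j = 0 := by omega
    have hb0 : b = 0 := by omega
    simp [hj, hb0]
  · rw [Nat.digits_def' (by norm_num) h]
    have h1 : (2 * j + b) % 2 = b := by omega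
    have h2 : (2 * j + b) / 2 = j := by omega
    rw [h1, h2]
    interval_cases b <;> simp [List.count_cons]

lemma s_compl : ∀ m : ℕ, ∀ i < 2 ^ m,
    (Nat.digits 2 i).count 1 + (Nat.digits 2 (2 ^ m - 1 - i)).count 1 = m := by
  intro m
  induction m with
  | zero => intro i hi; interval_cases i; simp
  | succ m ih =>
    intro i hi
    have hq : i / 2 < 2 ^ m := by
      have := Nat.pow_succ 2 m ▸ hi; omega
    have hb : i % 2 < 2 := Nat.mod_lt _ (by norm_num)
    have hi2 : i = 2 * (i / 2) + i % 2 := by omega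
    have hcomp : 2 ^ (m + 1) - 1 - i = 2 * (2 ^ m - 1 - i / 2) + (1 - i % 2) := by
      have : 2 ^ (m + 1) = 2 * 2 ^ m := by ring
      have h1 : 0 < 2 ^ m := Nat.pow_pos (by norm_num)
      omega
    have e1 := s_step (i / 2) (i % 2) hb
    rw [← hi2] at e1
    have e2 := s_step (2 ^ m - 1 - i / 2) (1 - i % 2) (by omega)
    rw [← hcomp] at e2
    have := ih (i / 2) hq
    rw [e1, e2]
    omega

lemma tm_compl (n i : ℕ) (hi : i < 4 ^ n) :
    thueMorse (4 ^ n - 1 - i) = thueMorse i := by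
  have h4 : (4 : ℕ) ^ n = 2 ^ (2 * n) := by
    rw [pow_mul]; norm_num
  have := s_compl (2 * n) i (h4 ▸ hi)
  unfold thueMorse
  rw [h4] at *
  omega

/-- For every `n ≥ 0`, the prefix of length `4 ^ n` of the Thue–Morse word is a
palindrome. -/
theorem thueMorse_prefix_pow_four_palindrome :
    ∀ n : ℕ, IsPalindrome (wordPrefix thueMorse (4 ^ n)) := by
  intro n
  unfold IsPalindrome wordPrefix
  apply List.ext_getElem
  · simp
  · intro i h1 h2
    have hlen : i < 4 ^ n := by simpa using h2
    rw [List.getElem_reverse, List.getElem_ofFn, List.getElem_ofFn]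
    simp only [List.length_ofFn, Fin.cast_mk]
    rw [tm_compl n i hlen]
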